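/- Let Γ be a locally compact group acting continuously on a locally compact Hausdorff space Y such that the action is proper (the map Γ × Y → Y × Y, (γ,y) ↦ (γ·y, y), is a proper map, i.e. preimages of compact sets are compact) and cocompact (there is a compact set K ⊆ Y with Γ·K = Y). Suppose Y carries a uniform structure 𝒰 inducing its topology which is Γ-invariant, meaning every entourage contains a Γ-invariant entourage. Then a subset U ⊆ Y×Y is an entourage of 𝒰 if and only if U contains a Γ-invariant neighborhood of the diagonal. In particular there is at most one Γ-invariant uniform structure inducing the topology of Y. -/

import Mathlib

open UniformSpace Set Filter

/-- Let `Γ` be a locally compact group acting continuously, properly and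
cocompactly on a locally compact Hausdorff space `Y`. Suppose the topology of `Y` comes from a
uniform structure which is `Γ`-invariant (every entourage contains a `Γ`-invariant entourage).
Then a set `U ⊆ Y × Y` is an entourage if and only if it contains a `Γ`-invariant neighborhood
of the diagonal. -/
theorem stmt_1 {Γ Y : Type*} [Group Γ] [TopologicalSpace Γ] [IsTopologicalGroup Γ]
    [LocallyCompactSpace Γ] [UniformSpace Y] [T2Space Y] [LocallyCompactSpace Y]
    [MulAction Γ Y] [ContinuousSMul Γ Y]
    (hproper : IsProperMap (fun p : Γ × Y => (p.1 • p.2, p.2)))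
    (hcocompact : ∃ K : Set Y, IsCompact K ∧ ∀ y : Y, ∃ γ : Γ, ∃ k ∈ K, y = γ • k)
    (hinv : ∀ U ∈ uniformity Y, ∃ V ∈ uniformity Y, V ⊆ U ∧
      ∀ (γ : Γ) (y y' : Y), (γ • y, γ • y') ∈ V ↔ (y, y') ∈ V)
    (U : Set (Y × Y)) :
    U ∈ uniformity Y ↔ ∃ V : Set (Y × Y),
      (∀ (γ : Γ) (y y' : Y), (γ • y, γ • y') ∈ V ↔ (y, y') ∈ V) ∧
      V ∈ nhdsSet (Set.diagonal Y) ∧ V ⊆ U := by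
  constructor
  · intro hU
    obtain ⟨V, hV, hVU, hVinv⟩ := hinv U hU
    exact ⟨V, hVinv, nhdsSet_diagonal_le_uniformity hV, hVU⟩
  · rintro ⟨V, hVinv, hVnhds, hVU⟩
    obtain ⟨K, hK, hKco⟩ := hcocompact
    -- for each point k, an invariant entourage W k which is "small near k" w.r.t. V
    have key : ∀ k : Y, ∃ W ∈ uniformity Y,
        (∀ (γ : Γ) (y y' : Y), (γ • y, γ • y') ∈ W ↔ (y, y') ∈ W) ∧
        ∀ y ∈ ball k W, ∀ z, (y, z) ∈ W → (y, z) ∈ V := by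
      intro k
      have hVk : V ∈ nhds (k, k) :=
        mem_nhdsSet_iff_forall.mp hVnhds (k, k) rfl
      rw [nhds_prod_eq, Filter.mem_prod_iff] at hVk
      obtain ⟨T1, hT1, T2, hT2, hT12⟩ := hVk
      obtain ⟨S, hS, hSball⟩ := UniformSpace.mem_nhds_iff.mp (Filter.inter_mem hT1 hT2)
      obtain ⟨W', hW', hW'comp⟩ := comp_mem_uniformity_sets hS
      obtain ⟨W, hW, hWW', hWinv⟩ := hinv W' hW'
      have hW'S : W' ⊆ S := fun p hp =>
        hW'comp ⟨p.1, refl_mem_uniformity hW', hp⟩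
      refine ⟨W, hW, hWinv, ?_⟩
      intro y hy z hz
      have hyT : y ∈ T1 ∩ T2 := hSball (hW'S (hWW' hy))
      have hzT : z ∈ T1 ∩ T2 := hSball (hW'comp ⟨y, hWW' hy, hWW' hz⟩)
      exact hT12 ⟨hyT.1, hzT.2⟩
    choose W hWu hWinv hWV using key
    -- finite subcover of K by interiors of balls
    have hcover : K ⊆ ⋃ k ∈ K, interior (ball k (W k)) := fun k hk =>
      Set.mem_biUnion hk (mem_interior_iff_mem_nhds.mpr (ball_mem_nhds k (hWu k)))
    obtain ⟨t, htK, htfin, htcover⟩ := hK.elim_finite_subcover_image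
      (fun k _ => isOpen_interior) hcover
    -- Lebesgue number for the finite cover
    obtain ⟨L, hL, hLleb⟩ := lebesgue_number_lemma (ι := t) hK
      (fun i => isOpen_interior (s := ball i.1 (W i.1)))
      (by intro x hx
          obtain ⟨k, hkt, hkx⟩ := Set.mem_iUnion₂.mp (htcover hx)
          exact Set.mem_iUnion.mpr ⟨⟨k, hkt⟩, hkx⟩)
    -- the finite intersection entourage
    have hWinf : (⋂ k ∈ t, W k) ∈ uniformity Y :=
      (Filter.biInter_mem htfin).mpr fun k _ => hWu k
    obtain ⟨E, hE, hEsub, hEinv⟩ := hinv _ (Filter.inter_mem hWinf hL)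
    have hEV : E ⊆ V := by
      rintro ⟨y, y'⟩ hyy'
      obtain ⟨γ, k, hkK, rfl⟩ := hKco y
      have h1 : (k, γ⁻¹ • y') ∈ E := by
        have := (hEinv γ k (γ⁻¹ • y')).mp
        simpa using this (by simpa using hyy')
      obtain ⟨i, hi⟩ := hLleb k hkK
      have hkball : k ∈ ball i.1 (W i.1) :=
        interior_subset (hi (mem_ball_self k hL))
      have hmem : (k, γ⁻¹ • y') ∈ W i.1 := by
        have := (hEsub h1).1
        exact Set.mem_iInter₂.mp this i.1 i.2
      have hV' : (k, γ⁻¹ • y') ∈ V := hWV i.1 k hkball _ hmem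
      have := (hVinv γ k (γ⁻¹ • y')).mpr hV'
      simpa using this
    exact Filter.mem_of_superset (Filter.mem_of_superset hE hEV) hVU
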